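/- For every real μ > 0 and every real ξ > −√μ, one has 1/(8(ξ+√μ)²) + 2·(ξ − √μ/2)·√(ξ+√μ) · (2ξ + 5√μ)/(72·μ·(ξ+√μ)^{5/2}) = 1/(18μ). -/

import Mathlib

/-- Genus-one Schwinger–Dyson relation of pure DT:
`F₂⁽⁰⁾(ξ,ξ) + 2F₁⁽⁰⁾(ξ)F₁⁽¹⁾(ξ) = 1/(18μ)` for every `μ > 0` and `ξ > −√μ`. -/
theorem pure_DT_genus_one_SD (μ ξ : ℝ) (hμ : 0 < μ) (hξ : -Real.sqrt μ < ξ) :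
    1 / (8 * (ξ + Real.sqrt μ) ^ 2)
      + 2 * ((ξ - Real.sqrt μ / 2) * Real.sqrt (ξ + Real.sqrt μ))
        * ((2 * ξ + 5 * Real.sqrt μ) /
            (72 * μ * (ξ + Real.sqrt μ) ^ ((5 : ℝ) / 2)))
      = 1 / (18 * μ) := by
  set s := Real.sqrt μ with hs
  have hx : (0 : ℝ) < ξ + s := by linarith
  have hsq : s ^ 2 = μ := Real.sq_sqrt hμ.le
  have hr : (ξ + s) ^ ((5 : ℝ) / 2)
      = (ξ + s) ^ 2 * Real.sqrt (ξ + s) := by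
    rw [Real.sqrt_eq_rpow, show ((5 : ℝ) / 2) = (2 : ℕ) + (1 / 2 : ℝ) by norm_num,
      Real.rpow_add hx, Real.rpow_natCast]
  have hss : Real.sqrt (ξ + s) * Real.sqrt (ξ + s) = ξ + s :=
    Real.mul_self_sqrt hx.le
  have hspos : (0 : ℝ) < Real.sqrt (ξ + s) := Real.sqrt_pos.mpr hx
  rw [hr]
  have h1 : (ξ + s) ≠ 0 := hx.ne'
  have h2 : Real.sqrt (ξ + s) ≠ 0 := hspos.ne'
  field_simp
  linear_combination (-1296) * hsq
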